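/- Fix a real u ≥ 1 and an integer m ≥ 1, and assume a(m−1)·u ≤ w. Define x* : ℕ → ℝ by x*(0) = 1, x*(1) = a(m−1)·u, and x*(i) = w·x*(i−1) − ∑_{j=1}^{i−1} x*(j) for i ≥ 2. Then: (i) x*(i) > 0 for all i ≥ 1 and x*(i) < x*(i+1) for all i ≥ 1; (ii) x*(m) = u; (iii) ∑_{j=1}^{i} x*(j) ≤ w·x*(i−1) for every i ≥ 1, with equality for every i ≥ 2; (iv) ∑_{j=1}^{m} x*(j) = c(m)·u; and (v) for every sequence x : ℕ → ℝ with x(0) = 1, x(i) ≥ 0 for 1 ≤ i ≤ m, x(m) = u, and ∑_{j=1}^{i} x(j) ≤ w·x(i−1) for all 1 ≤ i ≤ m, one has ∑_{j=1}^{m} x(j) ≥ c(m)·u. That is, x* is an optimal feasible solution of the linear program L_{m,u}, with optimal value c(m)·u. -/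

import Mathlib

noncomputable def bseq (w : ℝ) : ℕ → ℝ
  | 0 => 0
  | i + 1 => (1 + bseq w i) / (w - 1 - bseq w i)

noncomputable def aseq (w : ℝ) : ℕ → ℝ
  | 0 => 1
  | i + 1 => aseq w i / (w - 1 - bseq w i)

noncomputable def dseq (w : ℝ) : ℕ → ℝ
  | 0 => 1
  | i + 1 => dseq w i * (1 + bseq w i)

noncomputable def cseq (w : ℝ) : ℕ → ℝ
  | 0 => 0
  | i + 1 => cseq w i + dseq w i * aseq w i

section aux
variable {w : ℝ}

lemma bseq_bounds (hw : 4 ≤ w) : ∀ i, 0 ≤ bseq w i ∧ bseq w i < 1 := by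
  intro i
  induction i with
  | zero => simp [bseq]
  | succ i ih =>
    obtain ⟨h0, h1⟩ := ih
    have hd : 2 ≤ w - 1 - bseq w i := by linarith
    constructor
    · exact div_nonneg (by linarith) (by linarith)
    · rw [bseq, div_lt_one (by linarith)]; linarith

lemma denom_pos (hw : 4 ≤ w) (i : ℕ) : 2 ≤ w - 1 - bseq w i := by
  obtain ⟨h0, h1⟩ := bseq_bounds hw i; linarith

lemma bseq_succ_eq (hw : 4 ≤ w) (i : ℕ) :
    bseq w (i + 1) * (w - 1 - bseq w i) = 1 + bseq w i := by
  have hd := denom_pos hw i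
  rw [bseq, div_mul_cancel₀]; linarith

lemma aseq_succ_eq (hw : 4 ≤ w) (i : ℕ) :
    aseq w (i + 1) * (w - 1 - bseq w i) = aseq w i := by
  have hd := denom_pos hw i
  rw [aseq, div_mul_cancel₀]; linarith

lemma aseq_pos (hw : 4 ≤ w) : ∀ i, 0 < aseq w i := by
  intro i
  induction i with
  | zero => norm_num [aseq]
  | succ i ih => rw [aseq]; exact div_pos ih (by linarith [denom_pos hw i])

lemma dseq_pos (hw : 4 ≤ w) : ∀ i, 0 < dseq w i := by
  intro i
  induction i with
  | zero => norm_num [dseq]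
  | succ i ih =>
    rw [dseq]
    have := (bseq_bounds hw i).1
    positivity

lemma bseq_nonneg (hw : 4 ≤ w) (i : ℕ) : 0 ≤ bseq w i := (bseq_bounds hw i).1

lemma I2 (hw : 4 ≤ w) (i : ℕ) :
    (1 + bseq w i) * (1 + bseq w (i + 1)) = w * bseq w (i + 1) := by
  have h := bseq_succ_eq hw i
  nlinarith [h]

lemma I5 (hw : 4 ≤ w) (i : ℕ) :
    bseq w (i + 2) * (w - 2 - bseq w i) = 1 := by
  have h1 := bseq_succ_eq hw i
  have h2 := bseq_succ_eq hw (i + 1)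
  have hd1 := denom_pos hw i
  have hd2 := denom_pos hw (i + 1)
  have hb1 := bseq_bounds hw i
  have hb2 := bseq_bounds hw (i + 1)
  nlinarith [h1, h2]

lemma Ainv_rec (hw : 4 ≤ w) (i : ℕ) :
    (aseq w (i + 2))⁻¹ = w * ((aseq w (i + 1))⁻¹ - (aseq w i)⁻¹) := by
  have h1 := aseq_succ_eq hw i
  have h2 := aseq_succ_eq hw (i + 1)
  have hb1 := bseq_succ_eq hw i
  have hd0 := denom_pos hw i
  have hd1 := denom_pos hw (i + 1)
  have ha0 := aseq_pos hw i
  have ha1 := aseq_pos hw (i + 1)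
  have ha2 := aseq_pos hw (i + 2)
  have key : (w - 1 - bseq w i) * (w - 1 - bseq w (i+1)) = w * (w - 2 - bseq w i) := by
    linear_combination -hb1
  field_simp
  linear_combination (w * aseq w (i+2) - aseq w (i+1)) * h1
    - (aseq w (i+1) * (w - 1 - bseq w i)) * h2 + (aseq w (i+1) * aseq w (i+2)) * key

lemma sumA (hw : 4 ≤ w) : ∀ k, ∑ j ∈ Finset.range (k + 2), (aseq w j)⁻¹ = w * (aseq w k)⁻¹ := by
  intro k
  induction k with
  | zero =>
    have h1 := aseq_succ_eq hw 0
    have ha1 := aseq_pos hw 1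
    rw [Finset.sum_range_succ, Finset.sum_range_one]
    simp only [aseq, bseq] at *
    field_simp
    ring
  | succ k ih =>
    rw [Finset.sum_range_succ, ih, Ainv_rec hw k]
    ring

lemma da_eq (hw : 4 ≤ w) : ∀ i, dseq w (i+1) * aseq w (i+1) = bseq w (i+1) - bseq w i := by
  intro i
  induction i with
  | zero =>
    simp [dseq, aseq, bseq]
  | succ i ih =>
    have ha := aseq_succ_eq hw (i+1)
    have hb := bseq_succ_eq hw (i+1)
    have hb0 := bseq_succ_eq hw i
    have hd := denom_pos hw (i+1)
    have hdt := denom_pos hw i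
    have hbb := bseq_bounds hw i
    have key : bseq w (i+2) - bseq w (i+1) = (bseq w (i+1) - bseq w i) * bseq w (i+2) := by
      have h5 := I5 hw i
      have hpos : (0:ℝ) < w - 2 - bseq w i := by linarith [hbb.2]
      have key' : (bseq w (i+2) - bseq w (i+1) - (bseq w (i+1) - bseq w i) * bseq w (i+2))
          * (w - 2 - bseq w i) = 0 := by
        linear_combination (1 + bseq w i - bseq w (i+1)) * h5 - hb0
      rcases mul_eq_zero.1 key' with h | h
      · linarith
      · linarith
    have hne : w - 1 - bseq w (i+1) ≠ 0 := by linarith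
    show dseq w (i+1+1) * aseq w (i+1+1) = _
    rw [dseq, key]
    have goal' : (dseq w (i+1) * (1 + bseq w (i+1)) * aseq w (i+1+1)) * (w - 1 - bseq w (i+1))
        = ((bseq w (i+1) - bseq w i) * bseq w (i+2)) * (w - 1 - bseq w (i+1)) := by
      linear_combination (dseq w (i+1) * (1 + bseq w (i+1))) * ha
        + (1 + bseq w (i+1)) * ih - (bseq w (i+1) - bseq w i) * hb
    exact mul_right_cancel₀ hne goal'

lemma cseq_eq (hw : 4 ≤ w) : ∀ i, cseq w (i+1) = 1 + bseq w i := by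
  intro i
  induction i with
  | zero => norm_num [cseq, dseq, aseq, bseq]
  | succ i ih =>
    show cseq w (i+1+1) = _
    rw [cseq, ih, da_eq hw i]
    ring

/-- Dual multipliers for the LP `L_{n+2,u}`. -/
noncomputable def lamf (w : ℝ) (n : ℕ) : ℕ → ℝ := fun j =>
  if j ≤ 1 then 0 else bseq w (n + 1) * dseq w n / dseq w (j - 2)

lemma lamf_nonneg (hw : 4 ≤ w) (n j : ℕ) : 0 ≤ lamf w n j := by
  unfold lamf
  split
  · exact le_refl 0
  · exact div_nonneg (mul_nonneg (bseq_nonneg hw _) (dseq_pos hw _).le) (dseq_pos hw _).le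

lemma lamf_one (w : ℝ) (n : ℕ) : lamf w n 1 = 0 := by simp [lamf]

lemma lamf_top (hw : 4 ≤ w) (n : ℕ) : lamf w n (n + 2) = bseq w (n + 1) := by
  have := dseq_pos hw n
  simp only [lamf, show ¬ (n + 2 ≤ 1) by omega, if_false, show n + 2 - 2 = n from rfl]
  field_simp

lemma Ebase (hw : 4 ≤ w) (n : ℕ) :
    1 + (lamf w n (n + 1) + lamf w n (n + 2)) = w * lamf w n (n + 2) := by
  rw [lamf_top hw]
  cases n with
  | zero =>
    have h := bseq_succ_eq hw 0
    have hb0 : bseq w 0 = 0 := rfl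
    rw [hb0] at h
    rw [show (0:ℕ)+1 = 1 from rfl, lamf_one]
    linarith
  | succ p =>
    have hdp := dseq_pos hw p
    have h5 := I5 hw p
    have hlam : lamf w (p+1) (p + 2) = bseq w (p + 2) * (1 + bseq w p) := by
      simp only [lamf, show ¬ (p + 2 ≤ 1) by omega, if_false, show p + 2 - 2 = p from rfl,
        show p + 1 + 1 = p + 2 from rfl, dseq]
      rw [mul_comm (dseq w p), mul_div_assoc, mul_div_assoc, div_self (ne_of_gt hdp)]
      ring
    rw [show p + 1 + 1 = p + 2 from rfl, hlam]
    linear_combination -h5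

lemma Estep (hw : 4 ≤ w) (n k : ℕ) (hk : 1 ≤ k) :
    lamf w n k + w * lamf w n (k + 2) = w * lamf w n (k + 1) := by
  match k, hk with
  | 1, _ =>
    simp only [lamf_one, lamf, show ¬ (3 ≤ 1) by omega, show ¬ (2 ≤ 1) by omega, if_false,
      show (3:ℕ) - 2 = 1 from rfl, show (2:ℕ) - 2 = 0 from rfl]
    norm_num [dseq, bseq]
  | (j+2), _ =>
    have hdj := dseq_pos hw j
    have hd1 := dseq_pos hw (j+1)
    have hd2 := dseq_pos hw (j+2)
    have hi2 := I2 hw j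
    have e1 : dseq w (j+1) = dseq w j * (1 + bseq w j) := rfl
    have e2 : dseq w (j+2) = dseq w (j+1) * (1 + bseq w (j+1)) := rfl
    simp only [lamf, show ¬ (j + 2 ≤ 1) by omega, show ¬ (j + 4 ≤ 1) by omega,
      show ¬ (j + 3 ≤ 1) by omega, if_false,
      show j + 2 - 2 = j from rfl, show j + 2 + 2 - 2 = j + 2 from rfl,
      show j + 2 + 1 - 2 = j + 1 from rfl]
    rw [e2, e1]
    have h1 : (0:ℝ) < 1 + bseq w j := by linarith [bseq_nonneg hw j]
    have h2 : (0:ℝ) < 1 + bseq w (j+1) := by linarith [bseq_nonneg hw (j+1)]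
    field_simp
    linear_combination (bseq w (n+1) * dseq w n) * hi2

lemma E_all (hw : 4 ≤ w) (n : ℕ) :
    ∀ t k, k + t = n + 1 → 1 ≤ k →
      1 + ∑ i ∈ Finset.Icc k (n + 2), lamf w n i = w * lamf w n (k + 1) := by
  intro t
  induction t with
  | zero =>
    intro k hk hk1
    have hkn : k = n + 1 := by omega
    subst hkn
    rw [show Finset.Icc (n+1) (n+2) = {n+1, n+2} by ext j; simp [Finset.mem_Icc]; omega]
    rw [Finset.sum_insert (by simp), Finset.sum_singleton]
    rw [show n + 1 + 1 = n + 2 from rfl]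
    exact Ebase hw n
  | succ t iht =>
    intro k hk hk1
    have hsplit : Finset.Icc k (n + 2) = insert k (Finset.Icc (k+1) (n+2)) := by
      ext j; simp only [Finset.mem_Icc, Finset.mem_insert]; omega
    rw [hsplit, Finset.sum_insert (by simp)]
    have ih := iht (k+1) (by omega) (by omega)
    have hst := Estep hw n k hk1
    linarith

end aux

/-- if `a (m-1) * u ≤ w`, the sequence `x*` is an optimal feasible
solution of the linear program `L_{m,u}`, with optimal value `c m * u`. -/
theorem xstar_optimal_feasible (w : ℝ) (hw : 4 ≤ w) (u : ℝ) (hu : 1 ≤ u)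
    (m : ℕ) (hm : 1 ≤ m) (hfeas : aseq w (m - 1) * u ≤ w)
    (x : ℕ → ℝ) (hx0 : x 0 = 1) (hx1 : x 1 = aseq w (m - 1) * u)
    (hxrec : ∀ i : ℕ, 2 ≤ i → x i = w * x (i - 1) - ∑ j ∈ Finset.Icc 1 (i - 1), x j) :
    (∀ i : ℕ, 1 ≤ i → 0 < x i ∧ x i < x (i + 1)) ∧
    x m = u ∧
    (∀ i : ℕ, 1 ≤ i → ∑ j ∈ Finset.Icc 1 i, x j ≤ w * x (i - 1)) ∧
    (∀ i : ℕ, 2 ≤ i → ∑ j ∈ Finset.Icc 1 i, x j = w * x (i - 1)) ∧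
    (∑ j ∈ Finset.Icc 1 m, x j = cseq w m * u) ∧
    (∀ y : ℕ → ℝ, y 0 = 1 → (∀ i : ℕ, 1 ≤ i → i ≤ m → 0 ≤ y i) → y m = u →
      (∀ i : ℕ, 1 ≤ i → i ≤ m → ∑ j ∈ Finset.Icc 1 i, y j ≤ w * y (i - 1)) →
      ∑ j ∈ Finset.Icc 1 m, y j ≥ cseq w m * u) := by
  obtain ⟨m', rfl⟩ : ∃ m', m = m' + 1 := ⟨m - 1, by omega⟩
  simp only [Nat.add_sub_cancel] at hfeas hx1
  have hupos : (0:ℝ) < u := by linarith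
  set K := aseq w m' * u with hK
  have hKpos : 0 < K := mul_pos (aseq_pos hw m') hupos
  have main : ∀ i, 1 ≤ i → x i = K * (aseq w (i-1))⁻¹ ∧
      (∑ j ∈ Finset.Icc 1 i, x j) = K * ∑ j ∈ Finset.range i, (aseq w j)⁻¹ := by
    intro i hi
    induction i, hi using Nat.le_induction with
    | base =>
      constructor
      · rw [hx1]; norm_num [aseq]
      · rw [Finset.Icc_self, Finset.sum_singleton, Finset.sum_range_one, hx1]
        norm_num [aseq]
    | succ i hi ih =>
      obtain ⟨hxi, hsum⟩ := ih
      have hnext : x (i+1) = K * (aseq w i)⁻¹ := by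
        rcases Nat.lt_or_ge i 2 with h2 | h2
        · have hi1 : i = 1 := by omega
          subst hi1
          have h := hxrec 2 (le_refl 2)
          rw [show (2:ℕ) - 1 = 1 from rfl, Finset.Icc_self, Finset.sum_singleton] at h
          have ha1 : aseq w 1 = (w - 1)⁻¹ := by
            rw [show aseq w 1 = aseq w 0 / (w - 1 - bseq w 0) from rfl,
              show aseq w 0 = (1:ℝ) from rfl, show bseq w 0 = (0:ℝ) from rfl, sub_zero, one_div]
          rw [h, hx1, ha1, inv_inv]
          ring
        · obtain ⟨p, rfl⟩ : ∃ p, i = p + 2 := ⟨i - 2, by omega⟩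
          have h := hxrec (p+3) (by omega)
          rw [show p + 3 - 1 = p + 2 from rfl] at h
          rw [h, hsum, show p + 2 = p + 2 from rfl]
          rw [show (∑ j ∈ Finset.range (p+2), (aseq w j)⁻¹) = w * (aseq w p)⁻¹ from sumA hw p]
          rw [hxi, show p + 2 - 1 = p + 1 from rfl, Ainv_rec hw p]
          ring
      refine ⟨by simpa using hnext, ?_⟩
      rw [Finset.sum_Icc_succ_top (by omega : 1 ≤ i + 1), hsum, Finset.sum_range_succ, hnext]
      ring
  have hT : ∀ i, 2 ≤ i → (∑ j ∈ Finset.Icc 1 i, x j) = w * x (i-1) := by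
    intro i hi
    obtain ⟨p, rfl⟩ : ∃ p, i = p + 2 := ⟨i - 2, by omega⟩
    rw [(main (p+2) (by omega)).2, sumA hw p, show p + 2 - 1 = p + 1 from rfl,
      (main (p+1) (by omega)).1, show p + 1 - 1 = p from rfl]
    ring
  refine ⟨?_, ?_, ?_, hT, ?_, ?_⟩
  · -- positivity and monotonicity
    intro i hi
    have h2 := (main (i+1) (by omega)).1
    simp only [Nat.add_sub_cancel] at h2
    obtain ⟨p, rfl⟩ : ∃ p, i = p + 1 := ⟨i - 1, by omega⟩
    have h1 := (main (p+1) (by omega)).1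
    simp only [Nat.add_sub_cancel] at h1
    have hap := aseq_pos hw p
    have hap1 := aseq_pos hw (p+1)
    have hlt : aseq w (p+1) < aseq w p := by
      nlinarith [aseq_succ_eq hw p, denom_pos hw p]
    constructor
    · rw [h1]; positivity
    · rw [h1, h2]
      have hinv : (aseq w p)⁻¹ < (aseq w (p+1))⁻¹ := by
        rw [inv_eq_one_div, inv_eq_one_div]
        exact one_div_lt_one_div_of_lt hap1 hlt
      exact mul_lt_mul_of_pos_left hinv hKpos
  · -- x m = u
    have h := (main (m'+1) (by omega)).1
    simp only [Nat.add_sub_cancel] at h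
    rw [h, hK, mul_comm (aseq w m') u, mul_assoc,
      mul_inv_cancel₀ (ne_of_gt (aseq_pos hw m')), mul_one]
  · -- feasibility inequalities
    intro i hi
    rcases Nat.lt_or_ge i 2 with h2 | h2
    · have : i = 1 := by omega
      subst this
      rw [Finset.Icc_self, Finset.sum_singleton, show (1:ℕ) - 1 = 0 from rfl, hx0, hx1, mul_one]
      exact hfeas
    · exact le_of_eq (hT i h2)
  · -- value = c m * u
    cases m' with
    | zero =>
      have hc : cseq w 1 = 1 := by
        have h := cseq_eq hw 0
        rw [show bseq w 0 = (0:ℝ) from rfl] at h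
        linarith
      rw [Finset.Icc_self, Finset.sum_singleton, hx1, hK,
        show aseq w 0 = (1:ℝ) from rfl, hc, one_mul]
    | succ q =>
      rw [hT (q+2) (by omega), show q + 2 - 1 = q + 1 from rfl, (main (q+1) (by omega)).1,
        show q + 1 - 1 = q from rfl]
      have hane : aseq w q ≠ 0 := ne_of_gt (aseq_pos hw q)
      have hA := aseq_succ_eq hw q
      have hW : (1 + bseq w (q+1)) * (w - 1 - bseq w q) = w := by
        linear_combination bseq_succ_eq hw q
      rw [show q + 1 + 1 = q + 2 from rfl, cseq_eq hw (q+1), hK]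
      field_simp
      linear_combination (1 + bseq w (q+1)) * hA - aseq w (q+1) * hW
  · -- optimality
    intro y hy0 hynn hym hyfeas
    cases m' with
    | zero =>
      rw [Finset.Icc_self, Finset.sum_singleton]
      have hc : cseq w 1 = 1 := by
        have h := cseq_eq hw 0
        rw [show bseq w 0 = (0:ℝ) from rfl] at h
        linarith
      rw [hc, one_mul, ← hym]
    | succ n =>
      show (∑ j ∈ Finset.Icc 1 (n+2), y j) ≥ cseq w (n+2) * u
      have hym' : y (n+2) = u := hym
      have E' : ∀ k, 1 ≤ k → k ≤ n + 1 →
          1 + ∑ i ∈ Finset.Icc k (n + 2), lamf w n i = w * lamf w n (k + 1) :=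
        fun k h1 h2 => E_all hw n (n + 1 - k) k (by omega) h1
      have ID : ∀ t k, k + t = n + 2 → 1 ≤ k →
          (∑ j ∈ Finset.Icc 1 (n+2), y j) - cseq w (n+2) * y (n+2)
            - ∑ i ∈ Finset.Icc (k+1) (n+2), lamf w n i * (w * y (i-1) - ∑ j ∈ Finset.Icc 1 i, y j)
          = (1 + ∑ i ∈ Finset.Icc (k+1) (n+2), lamf w n i) * (∑ j ∈ Finset.Icc 1 (k-1), y j)
            - lamf w n k * y k := by
        intro t
        induction t with
        | zero =>
          intro k hkt hk1
          have hkn : k = n + 2 := by omega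
          subst hkn
          rw [show Finset.Icc (n+3) (n+2) = ∅ from Finset.Icc_eq_empty (by omega)]
          simp only [Finset.sum_empty]
          have hc : cseq w (n+2) = 1 + lamf w n (n+2) := by
            rw [lamf_top hw, cseq_eq hw (n+1)]
          have hs : (∑ j ∈ Finset.Icc 1 (n+2), y j) = (∑ j ∈ Finset.Icc 1 (n+1), y j) + y (n+2) :=
            Finset.sum_Icc_succ_top (by omega) _
          rw [hc, hs, show n + 2 - 1 = n + 1 from rfl]
          ring
        | succ t iht =>
          intro k hkt hk1
          obtain ⟨p, rfl⟩ : ∃ p, k = p + 1 := ⟨k - 1, by omega⟩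
          have ih := iht (p+2) (by omega) (by omega)
          have hins : Finset.Icc (p+2) (n+2) = insert (p+2) (Finset.Icc (p+3) (n+2)) := by
            ext j; simp only [Finset.mem_Icc, Finset.mem_insert]; omega
          rw [show p + 1 + 1 = p + 2 from rfl, hins, Finset.sum_insert (by simp),
            Finset.sum_insert (by simp)]
          rw [show p + 2 + 1 = p + 3 from rfl] at ih
          simp only [show p + 2 - 1 = p + 1 from rfl, show p + 1 - 1 = p from rfl] at ih ⊢
          have hE := E' (p+1) (by omega) (by omega)
          rw [show p + 1 + 1 = p + 2 from rfl] at hE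
          have hins2 : Finset.Icc (p+1) (n+2) = insert (p+1) (Finset.Icc (p+2) (n+2)) := by
            ext j; simp only [Finset.mem_Icc, Finset.mem_insert]; omega
          rw [hins2, Finset.sum_insert (by simp), hins, Finset.sum_insert (by simp)] at hE
          have hs1 : (∑ j ∈ Finset.Icc 1 (p+2), y j) = (∑ j ∈ Finset.Icc 1 (p+1), y j) + y (p+2) :=
            Finset.sum_Icc_succ_top (by omega) _
          have hs2 : (∑ j ∈ Finset.Icc 1 (p+1), y j) = (∑ j ∈ Finset.Icc 1 p, y j) + y (p+1) :=
            Finset.sum_Icc_succ_top (by omega) _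
          rw [hs2] at ih
          rw [hs1, hs2]
          linear_combination ih + y (p+1) * hE
      have hid := ID (n+1) 1 (by omega) (le_refl 1)
      rw [show Finset.Icc 1 (0:ℕ) = ∅ from Finset.Icc_eq_empty (by omega), Finset.sum_empty,
        lamf_one] at hid
      have hnn : 0 ≤ ∑ i ∈ Finset.Icc 2 (n+2),
          lamf w n i * (w * y (i-1) - ∑ j ∈ Finset.Icc 1 i, y j) := by
        apply Finset.sum_nonneg
        intro i hi
        rw [Finset.mem_Icc] at hi
        have hfy := hyfeas i (by omega) (by omega)
        exact mul_nonneg (lamf_nonneg hw n i) (by linarith)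
      rw [show (1:ℕ) + 1 = 2 from rfl] at hid
      rw [← hym']
      linarith
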